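/- Let c ∈ ℝ and let f : ℝ → ℝ be continuous and monotonically nondecreasing. Then for every T ≥ 0 and every Y ∈ ℝ there exists a unique real number κ such that κ = f( Y − (2κ + c) T ). (In particular, the hodograph formula κ(Y,T) = f(Y − (2κ(Y,T)+c)T) defines a function on all of ℝ × [0,∞), i.e. the initial value problem with monotonically increasing initial data admits a globally defined hodograph solution.) -/
import Mathlib


/-- For continuous monotonically nondecreasing initial data `f`, the hodograph
relation `κ = f(Y − (2κ+c)T)` has a unique solution `κ` for every `T ≥ 0` and
every `Y`; i.e. the hodograph formula defines a global solution. -/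
theorem hodograph_global_existence_uniqueness (c : ℝ) (f : ℝ → ℝ)
    (hfc : Continuous f) (hfm : Monotone f) :
    ∀ T : ℝ, 0 ≤ T → ∀ Y : ℝ, ∃! κ : ℝ, κ = f (Y - (2 * κ + c) * T) := by
  intro T hT Y
  set g : ℝ → ℝ := fun κ => κ - f (Y - (2 * κ + c) * T) with hg
  have hgc : Continuous g := by
    apply Continuous.sub continuous_id
    exact hfc.comp (by continuity)
  set M : ℝ := f (Y - c * T) with hM
  set a : ℝ := min 0 M - 1 with ha
  set b : ℝ := max 0 M + 1 with hb
  have hab : a ≤ b := by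
    nlinarith [min_le_left 0 M, le_max_left 0 M]
  have hga : g a ≤ 0 := by
    have ha0 : a ≤ 0 := by nlinarith [min_le_left 0 M]
    have harg : Y - c * T ≤ Y - (2 * a + c) * T := by nlinarith
    have := hfm harg
    have haM : a ≤ M - 1 := by nlinarith [min_le_right 0 M]
    simp only [hg]
    linarith
  have hgb : 0 ≤ g b := by
    have hb0 : 0 ≤ b := by nlinarith [le_max_left 0 M]
    have harg : Y - (2 * b + c) * T ≤ Y - c * T := by nlinarith
    have := hfm harg
    have hbM : M + 1 ≤ b := by nlinarith [le_max_right 0 M]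
    simp only [hg]
    linarith
  have hivt : (0 : ℝ) ∈ Set.Icc (g a) (g b) := ⟨hga, hgb⟩
  obtain ⟨κ, -, hκ⟩ := intermediate_value_Icc hab hgc.continuousOn hivt
  refine ⟨κ, ?_, ?_⟩
  · have : κ - f (Y - (2 * κ + c) * T) = 0 := hκ
    linarith
  · intro y hy
    have hκ' : κ = f (Y - (2 * κ + c) * T) := by
      have : κ - f (Y - (2 * κ + c) * T) = 0 := hκ
      linarith
    rcases lt_trichotomy y κ with h | h | h
    · exfalso
      have harg : Y - (2 * κ + c) * T ≤ Y - (2 * y + c) * T := by nlinarith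
      have := hfm harg
      linarith [hy ▸ this, hκ'.ge]
    · exact h
    · exfalso
      have harg : Y - (2 * y + c) * T ≤ Y - (2 * κ + c) * T := by nlinarith
      have := hfm harg
      linarith [hy ▸ this, hκ'.ge]
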